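/- arXiv:2401.10911 — 3 statements merged into one kernel-verified Lean document; each statement's English description precedes it below -/
import Mathlib

section
/- Let Ω ⊆ ℝ² be open, g ∈ ℝ, let Ψ : Ω → ℝ be three times continuously differentiable, P : Ω → ℝ twice continuously differentiable, and ρ : ℝ → ℝ twice continuously differentiable. Suppose that at every point (x, y) ∈ Ω: Ψ_y Ψ_{xy} − Ψ_x Ψ_{yy} = −P_x and Ψ_x Ψ_{xy} − Ψ_y Ψ_{xx} = −P_y − g·ρ(−Ψ). Then the function V := ΔΨ − g·y·ρ′(−Ψ) satisfies Ψ_y V_x − Ψ_x V_y = 0 at every point of Ω, i.e. ∇^⊥Ψ · ∇(ΔΨ − g y ρ′(−Ψ)) = 0 on Ω. -/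
/-- Partial derivative in the horizontal direction `x`. -/
noncomputable def pd1 (f : ℝ × ℝ → ℝ) (p : ℝ × ℝ) : ℝ := fderiv ℝ f p (1, 0)

/-- Partial derivative in the vertical direction `y`. -/
noncomputable def pd2 (f : ℝ × ℝ → ℝ) (p : ℝ × ℝ) : ℝ := fderiv ℝ f p (0, 1)

/-- Laplacian of a function on `ℝ²`. -/
noncomputable def lap (f : ℝ × ℝ → ℝ) (p : ℝ × ℝ) : ℝ :=
  pd1 (pd1 f) p + pd2 (pd2 f) p

open Filter Topology

private lemma pd_cd2 {f : ℝ × ℝ → ℝ} {p : ℝ × ℝ} (hf : ContDiffAt ℝ 3 f p) (v : ℝ × ℝ) :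
    ContDiffAt ℝ 2 (fun q => fderiv ℝ f q v) p :=
  (hf.fderiv_right (m := 2) (by norm_num)).clm_apply contDiffAt_const

private lemma pd_cd1 {f : ℝ × ℝ → ℝ} {p : ℝ × ℝ} (hf : ContDiffAt ℝ 2 f p) (v : ℝ × ℝ) :
    ContDiffAt ℝ 1 (fun q => fderiv ℝ f q v) p :=
  (hf.fderiv_right (m := 1) (by norm_num)).clm_apply contDiffAt_const

private lemma pd_swap {f : ℝ × ℝ → ℝ} {p : ℝ × ℝ} (hf : ContDiffAt ℝ 2 f p) (v w : ℝ × ℝ) :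
    fderiv ℝ (fun q => fderiv ℝ f q v) p w = fderiv ℝ (fun q => fderiv ℝ f q w) p v := by
  have hdf : DifferentiableAt ℝ (fderiv ℝ f) p :=
    (hf.fderiv_right (m := 1) (by norm_num)).differentiableAt (by norm_num)
  have h1 : ∀ u z : ℝ × ℝ, fderiv ℝ (fun q => fderiv ℝ f q u) p z
      = fderiv ℝ (fderiv ℝ f) p z u := by
    intro u z
    rw [fderiv_clm_apply hdf (differentiableAt_const u)]
    simp
  rw [h1, h1, hf.isSymmSndFDerivAt (by simp) w v]

private lemma pd_mul {f g : ℝ × ℝ → ℝ} {p v : ℝ × ℝ} (hf : DifferentiableAt ℝ f p)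
    (hg : DifferentiableAt ℝ g p) :
    fderiv ℝ (fun q => f q * g q) p v = f p * fderiv ℝ g p v + g p * fderiv ℝ f p v := by
  rw [fderiv_fun_mul hf hg]; simp [smul_eq_mul, mul_comm]

private lemma pd_comp {F : ℝ → ℝ} (hF : ContDiff ℝ 1 F) {Ψ : ℝ × ℝ → ℝ} {p v : ℝ × ℝ}
    (hΨ : DifferentiableAt ℝ Ψ p) :
    fderiv ℝ (fun q => F (-(Ψ q))) p v = deriv F (-(Ψ p)) * (-(fderiv ℝ Ψ p v)) := by
  have h1 : DifferentiableAt ℝ F (-(Ψ p)) := hF.differentiable one_ne_zero _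
  have h2 : DifferentiableAt ℝ (fun q => -(Ψ q)) p := hΨ.neg
  have hc := fderiv_comp p h1 h2
  rw [show (fun q => F (-(Ψ q))) = F ∘ (fun q => -(Ψ q)) from rfl, hc]
  simp only [ContinuousLinearMap.coe_comp', Function.comp_apply]
  rw [fderiv_fun_neg]
  have : ∀ t : ℝ, fderiv ℝ F (-(Ψ p)) t = t * deriv F (-(Ψ p)) := by
    intro t
    rw [show t = t • (1:ℝ) by simp, ContinuousLinearMap.map_smul, fderiv_apply_one_eq_deriv]
    simp [smul_eq_mul]
  simp [this]; ring

private lemma pd_snd {p v : ℝ × ℝ} (g : ℝ) :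
    fderiv ℝ (fun q : ℝ × ℝ => g * q.2) p v = g * v.2 := by
  have : (fun q : ℝ × ℝ => g * q.2) = fun q => g • (ContinuousLinearMap.snd ℝ ℝ ℝ) q := by
    ext q; simp
  rw [this, fderiv_fun_const_smul (ContinuousLinearMap.snd ℝ ℝ ℝ).differentiableAt,
    ContinuousLinearMap.fderiv]
  simp

private lemma fderiv_eq_of_eqOn {Ω : Set (ℝ × ℝ)} (hΩ : IsOpen Ω) {L R : ℝ × ℝ → ℝ}
    {p : ℝ × ℝ} (hp : p ∈ Ω) (h : ∀ q ∈ Ω, L q = R q) : fderiv ℝ L p = fderiv ℝ R p :=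
  Filter.EventuallyEq.fderiv_eq (by filter_upwards [hΩ.mem_nhds hp] with q hq using h q hq)

/-- If `Ψ` satisfies the stream-function form of the momentum equations with
density `ρ(−Ψ)`, then `V := ΔΨ − g·y·ρ′(−Ψ)` is constant along streamlines:
`Ψ_y V_x − Ψ_x V_y = 0`, i.e. `∇^⊥Ψ · ∇(ΔΨ − g y ρ′(−Ψ)) = 0` on `Ω`. -/
theorem stmt_6 (Ω : Set (ℝ × ℝ)) (hΩ : IsOpen Ω) (g : ℝ)
    (Ψ : ℝ × ℝ → ℝ) (hΨ : ContDiffOn ℝ 3 Ψ Ω)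
    (P : ℝ × ℝ → ℝ) (hP : ContDiffOn ℝ 2 P Ω)
    (ρ : ℝ → ℝ) (hρ : ContDiff ℝ 2 ρ)
    (heq1 : ∀ p ∈ Ω, pd2 Ψ p * pd2 (pd1 Ψ) p - pd1 Ψ p * pd2 (pd2 Ψ) p = -(pd1 P p))
    (heq2 : ∀ p ∈ Ω, pd1 Ψ p * pd2 (pd1 Ψ) p - pd2 Ψ p * pd1 (pd1 Ψ) p
      = -(pd2 P p) - g * ρ (-(Ψ p)))
    (V : ℝ × ℝ → ℝ)
    (hV : V = fun p => lap Ψ p - g * p.2 * deriv ρ (-(Ψ p))) :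
    ∀ p ∈ Ω, pd2 Ψ p * pd1 V p - pd1 Ψ p * pd2 V p = 0 := by
  subst hV
  intro p hp
  have hmem := hΩ.mem_nhds hp
  have hΨp : ContDiffAt ℝ 3 Ψ p := hΨ.contDiffAt hmem
  have hPp : ContDiffAt ℝ 2 P p := hP.contDiffAt hmem
  -- regularity of ρ
  have hρ1 : ContDiff ℝ 1 ρ := hρ.of_le (by norm_num)
  have hρ' : ContDiff ℝ 1 (deriv ρ) := by
    have := (contDiff_succ_iff_deriv (n := 1)).mp (by exact_mod_cast hρ)
    exact this.2.2
  -- differentiability of the basic quantities at p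
  have hΨd : DifferentiableAt ℝ Ψ p := hΨp.differentiableAt (by norm_num)
  have ha2 : ContDiffAt ℝ 2 (pd1 Ψ) p := pd_cd2 hΨp (1, 0)
  have hb2 : ContDiffAt ℝ 2 (pd2 Ψ) p := pd_cd2 hΨp (0, 1)
  have had : DifferentiableAt ℝ (pd1 Ψ) p := ha2.differentiableAt two_ne_zero
  have hbd : DifferentiableAt ℝ (pd2 Ψ) p := hb2.differentiableAt two_ne_zero
  have haad : DifferentiableAt ℝ (pd1 (pd1 Ψ)) p := (pd_cd1 ha2 (1, 0)).differentiableAt one_ne_zero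
  have habd : DifferentiableAt ℝ (pd2 (pd1 Ψ)) p := (pd_cd1 ha2 (0, 1)).differentiableAt one_ne_zero
  have hbad : DifferentiableAt ℝ (pd1 (pd2 Ψ)) p := (pd_cd1 hb2 (1, 0)).differentiableAt one_ne_zero
  have hbbd : DifferentiableAt ℝ (pd2 (pd2 Ψ)) p := (pd_cd1 hb2 (0, 1)).differentiableAt one_ne_zero
  have hPad : DifferentiableAt ℝ (pd1 P) p := (pd_cd1 hPp (1, 0)).differentiableAt one_ne_zero
  have hPbd : DifferentiableAt ℝ (pd2 P) p := (pd_cd1 hPp (0, 1)).differentiableAt one_ne_zero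
  have hρΨd : DifferentiableAt ℝ (fun q => ρ (-(Ψ q))) p :=
    DifferentiableAt.comp p ((hρ1.differentiable one_ne_zero).differentiableAt) hΨd.neg
  have hρ'Ψd : DifferentiableAt ℝ (fun q => deriv ρ (-(Ψ q))) p :=
    DifferentiableAt.comp p ((hρ'.differentiable one_ne_zero).differentiableAt) hΨd.neg
  have hgq2d : DifferentiableAt ℝ (fun q : ℝ × ℝ => g * q.2) p :=
    (differentiable_snd.differentiableAt).const_mul g
  -- symmetry facts
  have s1 : ∀ q ∈ Ω, pd2 (pd1 Ψ) q = pd1 (pd2 Ψ) q := by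
    intro q hq
    exact pd_swap ((hΨ.contDiffAt (hΩ.mem_nhds hq)).of_le (by norm_num)) (1, 0) (0, 1)
  have s2 : pd1 (pd2 (pd1 Ψ)) p = pd2 (pd1 (pd1 Ψ)) p := pd_swap ha2 (0, 1) (1, 0)
  have s3 : pd2 (pd2 (pd1 Ψ)) p = pd1 (pd2 (pd2 Ψ)) p := by
    have h1 : fderiv ℝ (pd2 (pd1 Ψ)) p = fderiv ℝ (pd1 (pd2 Ψ)) p :=
      fderiv_eq_of_eqOn hΩ hp s1
    have h2 : pd2 (pd1 (pd2 Ψ)) p = pd1 (pd2 (pd2 Ψ)) p := pd_swap hb2 (1, 0) (0, 1)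
    calc pd2 (pd2 (pd1 Ψ)) p = fderiv ℝ (pd2 (pd1 Ψ)) p (0, 1) := rfl
      _ = fderiv ℝ (pd1 (pd2 Ψ)) p (0, 1) := by rw [h1]
      _ = pd1 (pd2 (pd2 Ψ)) p := h2
  have sP : pd2 (pd1 P) p = pd1 (pd2 P) p := pd_swap hPp (1, 0) (0, 1)
  -- differentiate equation 1 in the y-direction
  have E1 : pd2 (pd2 Ψ) p * pd2 (pd1 Ψ) p + pd2 Ψ p * pd2 (pd2 (pd1 Ψ)) p
      - (pd2 (pd1 Ψ) p * pd2 (pd2 Ψ) p + pd1 Ψ p * pd2 (pd2 (pd2 Ψ)) p)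
      = -(pd2 (pd1 P) p) := by
    have h := fderiv_eq_of_eqOn hΩ hp heq1
    have hL : fderiv ℝ (fun q => pd2 Ψ q * pd2 (pd1 Ψ) q - pd1 Ψ q * pd2 (pd2 Ψ) q) p (0, 1)
        = pd2 Ψ p * pd2 (pd2 (pd1 Ψ)) p + pd2 (pd1 Ψ) p * pd2 (pd2 Ψ) p
          - (pd1 Ψ p * pd2 (pd2 (pd2 Ψ)) p + pd2 (pd2 Ψ) p * pd2 (pd1 Ψ) p) := by
      rw [fderiv_fun_sub (hbd.fun_mul habd) (had.fun_mul hbbd), ContinuousLinearMap.sub_apply,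
        pd_mul hbd habd, pd_mul had hbbd]
      rfl
    have hR : fderiv ℝ (fun q => -(pd1 P q)) p (0, 1) = -(pd2 (pd1 P) p) := by
      rw [fderiv_fun_neg]; rfl
    have := congrFun (congrArg (fun (L : (ℝ×ℝ) →L[ℝ] ℝ) => (L : ℝ×ℝ → ℝ)) h) (0, 1)
    rw [hL, hR] at this
    linarith [this]
  -- differentiate equation 2 in the x-direction
  have E2 : pd1 (pd1 Ψ) p * pd2 (pd1 Ψ) p + pd1 Ψ p * pd1 (pd2 (pd1 Ψ)) p
      - (pd1 (pd2 Ψ) p * pd1 (pd1 Ψ) p + pd2 Ψ p * pd1 (pd1 (pd1 Ψ)) p)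
      = -(pd1 (pd2 P) p) - g * (deriv ρ (-(Ψ p)) * (-(pd1 Ψ p))) := by
    have h := fderiv_eq_of_eqOn hΩ hp heq2
    have hL : fderiv ℝ (fun q => pd1 Ψ q * pd2 (pd1 Ψ) q - pd2 Ψ q * pd1 (pd1 Ψ) q) p (1, 0)
        = pd1 Ψ p * pd1 (pd2 (pd1 Ψ)) p + pd2 (pd1 Ψ) p * pd1 (pd1 Ψ) p
          - (pd2 Ψ p * pd1 (pd1 (pd1 Ψ)) p + pd1 (pd1 Ψ) p * pd1 (pd2 Ψ) p) := by
      rw [fderiv_fun_sub (had.fun_mul habd) (hbd.fun_mul haad), ContinuousLinearMap.sub_apply,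
        pd_mul had habd, pd_mul hbd haad]
      rfl
    have hR : fderiv ℝ (fun q => -(pd2 P q) - g * ρ (-(Ψ q))) p (1, 0)
        = -(pd1 (pd2 P) p) - g * (deriv ρ (-(Ψ p)) * (-(pd1 Ψ p))) := by
      rw [fderiv_fun_sub hPbd.fun_neg (hρΨd.const_mul g), ContinuousLinearMap.sub_apply,
        fderiv_fun_neg, fderiv_const_mul hρΨd g]
      simp only [ContinuousLinearMap.neg_apply, ContinuousLinearMap.smul_apply, smul_eq_mul]
      rw [pd_comp hρ1 hΨd]
      rfl
    have := congrFun (congrArg (fun (L : (ℝ×ℝ) →L[ℝ] ℝ) => (L : ℝ×ℝ → ℝ)) h) (1, 0)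
    rw [hL, hR] at this
    linarith [this]
  -- expansion of the derivatives of V
  have key : ∀ v : ℝ × ℝ,
      fderiv ℝ (fun q => (pd1 (pd1 Ψ) q + pd2 (pd2 Ψ) q) - g * q.2 * deriv ρ (-(Ψ q))) p v
      = (fderiv ℝ (pd1 (pd1 Ψ)) p v + fderiv ℝ (pd2 (pd2 Ψ)) p v)
        - (g * v.2 * deriv ρ (-(Ψ p))
           + g * p.2 * (deriv (deriv ρ) (-(Ψ p)) * (-(fderiv ℝ Ψ p v)))) := by
    intro v
    rw [fderiv_fun_sub (haad.fun_add hbbd) (hgq2d.fun_mul hρ'Ψd), ContinuousLinearMap.sub_apply,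
      fderiv_fun_add haad hbbd, ContinuousLinearMap.add_apply,
      pd_mul (f := fun q : ℝ × ℝ => g * q.2) hgq2d hρ'Ψd, pd_snd, pd_comp hρ' hΨd]
    ring
  have hV1 : pd1 (fun q => lap Ψ q - g * q.2 * deriv ρ (-(Ψ q))) p
      = (pd1 (pd1 (pd1 Ψ)) p + pd1 (pd2 (pd2 Ψ)) p)
        - (g * 0 * deriv ρ (-(Ψ p))
           + g * p.2 * (deriv (deriv ρ) (-(Ψ p)) * (-(pd1 Ψ p)))) := key (1, 0)
  have hV2 : pd2 (fun q => lap Ψ q - g * q.2 * deriv ρ (-(Ψ q))) p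
      = (pd2 (pd1 (pd1 Ψ)) p + pd2 (pd2 (pd2 Ψ)) p)
        - (g * 1 * deriv ρ (-(Ψ p))
           + g * p.2 * (deriv (deriv ρ) (-(Ψ p)) * (-(pd2 Ψ p)))) := key (0, 1)
  rw [hV1, hV2]
  linear_combination E1 - E2 - pd2 Ψ p * s3 + pd1 Ψ p * s2
    + pd1 (pd1 Ψ) p * (s1 p hp) - sP
end

section
/- Let Ω ⊆ ℝ² be open, g ∈ ℝ, d ∈ ℝ, let Ψ : Ω → ℝ be twice continuously differentiable, P : Ω → ℝ differentiable, and ρ : ℝ → ℝ continuously differentiable. Suppose that at every point (x, y) ∈ Ω: Ψ_y Ψ_{xy} − Ψ_x Ψ_{yy} = −P_x and Ψ_x Ψ_{xy} − Ψ_y Ψ_{xx} = −P_y − g·ρ(−Ψ). Define E : Ω → ℝ by E(x, y) = |∇Ψ(x, y)|²/2 + P(x, y) + g·ρ(−Ψ(x, y))·(y + d). Then Ψ_y E_x − Ψ_x E_y = 0 at every point of Ω, i.e. the energy E is constant along each streamline of Ψ. -/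
/-- Bernoulli's law in stream-function form: if `Ψ` satisfies the stream-function
form of the momentum equations with density `ρ(−Ψ)`, then the energy
`E = |∇Ψ|²/2 + P + g·ρ(−Ψ)·(y + d)` satisfies `Ψ_y E_x − Ψ_x E_y = 0`,
i.e. `E` is constant along each streamline of `Ψ`. -/
theorem stmt_8 (Ω : Set (ℝ × ℝ)) (hΩ : IsOpen Ω) (g d : ℝ)
    (Ψ : ℝ × ℝ → ℝ) (hΨ : ContDiffOn ℝ 2 Ψ Ω)
    (P : ℝ × ℝ → ℝ) (hP : ∀ p ∈ Ω, DifferentiableAt ℝ P p)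
    (ρ : ℝ → ℝ) (hρ : ContDiff ℝ 1 ρ)
    (heq1 : ∀ p ∈ Ω, pd2 Ψ p * pd2 (pd1 Ψ) p - pd1 Ψ p * pd2 (pd2 Ψ) p = -(pd1 P p))
    (heq2 : ∀ p ∈ Ω, pd1 Ψ p * pd2 (pd1 Ψ) p - pd2 Ψ p * pd1 (pd1 Ψ) p
      = -(pd2 P p) - g * ρ (-(Ψ p)))
    (E : ℝ × ℝ → ℝ)
    (hE : E = fun p => ((pd1 Ψ p) ^ 2 + (pd2 Ψ p) ^ 2) / 2 + P p
      + g * ρ (-(Ψ p)) * (p.2 + d)) :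
    ∀ p ∈ Ω, pd2 Ψ p * pd1 E p - pd1 Ψ p * pd2 E p = 0 := by
  intro p hp
  have hΨat : ContDiffAt ℝ 2 Ψ p := hΨ.contDiffAt (hΩ.mem_nhds hp)
  have hΨp : DifferentiableAt ℝ Ψ p := hΨat.differentiableAt (by norm_num)
  have hB : DifferentiableAt ℝ (fderiv ℝ Ψ) p := by
    have hc : ContDiffOn ℝ 1 (fderiv ℝ Ψ) Ω := hΨ.fderiv_of_isOpen hΩ (by norm_num)
    exact (hc.differentiableOn (by norm_num)).differentiableAt (hΩ.mem_nhds hp)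
  set B := fderiv ℝ (fderiv ℝ Ψ) p with hBdef
  have hpd : ∀ v : ℝ × ℝ, HasFDerivAt (fun q => fderiv ℝ Ψ q v)
      ((ContinuousLinearMap.apply ℝ ℝ v).comp B) p :=
    fun v => ((ContinuousLinearMap.apply ℝ ℝ v).hasFDerivAt).comp p hB.hasFDerivAt
  have hsymm : ∀ v w, B v w = B w v :=
    (hΨat).isSymmSndFDerivAt (by simp [minSmoothness_of_isRCLikeNormedField])
  have ha : HasFDerivAt (pd1 Ψ) ((ContinuousLinearMap.apply ℝ ℝ ((1:ℝ),(0:ℝ))).comp B) p :=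
    hpd (1,0)
  have hb : HasFDerivAt (pd2 Ψ) ((ContinuousLinearMap.apply ℝ ℝ ((0:ℝ),(1:ℝ))).comp B) p :=
    hpd (0,1)
  have hρd : HasDerivAt ρ (deriv ρ (-(Ψ p))) (-(Ψ p)) :=
    ((hρ.differentiable (by norm_num)) _).hasDerivAt
  have hneg : HasFDerivAt (fun q => -(Ψ q)) (-(fderiv ℝ Ψ p)) p := hΨp.hasFDerivAt.neg
  have hcomp : HasFDerivAt (fun q => ρ (-(Ψ q)))
      ((deriv ρ (-(Ψ p))) • (-(fderiv ℝ Ψ p))) p := hρd.comp_hasFDerivAt p hneg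
  have hyd : HasFDerivAt (fun q : ℝ × ℝ => q.2 + d) (ContinuousLinearMap.snd ℝ ℝ ℝ) p :=
    (hasFDerivAt_snd).add_const d
  have hfe : E =ᶠ[nhds p] (fun q => 1/2 * (pd1 Ψ q * pd1 Ψ q + pd2 Ψ q * pd2 Ψ q)
      + P q + g * ρ (-(Ψ q)) * (q.2 + d)) :=
    Filter.Eventually.of_forall fun q => by rw [hE]; ring
  have hEt := HasFDerivAt.congr_of_eventuallyEq
    (((((ha.mul ha).add (hb.mul hb)).const_mul (1/2)).add
      (hP p hp).hasFDerivAt).add ((hcomp.const_mul g).mul hyd)) hfe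
  have h1 : pd1 E p = fderiv ℝ E p (1,0) := rfl
  have h2 : pd2 E p = fderiv ℝ E p (0,1) := rfl
  rw [h1, h2, hEt.fderiv]
  have e1 := heq1 p hp
  have e2 := heq2 p hp
  have hpd21 : pd2 (pd1 Ψ) p = B (0,1) (1,0) := by
    show fderiv ℝ (pd1 Ψ) p (0,1) = _
    rw [ha.fderiv]; rfl
  have hpd11 : pd1 (pd1 Ψ) p = B (1,0) (1,0) := by
    show fderiv ℝ (pd1 Ψ) p (1,0) = _
    rw [ha.fderiv]; rfl
  have hpd22 : pd2 (pd2 Ψ) p = B (0,1) (0,1) := by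
    show fderiv ℝ (pd2 Ψ) p (0,1) = _
    rw [hb.fderiv]; rfl
  rw [hpd21, hpd22] at e1
  rw [hpd21, hpd11] at e2
  have hsy := hsymm (1,0) (0,1)
  simp only [pd1, pd2] at *
  simp only [ContinuousLinearMap.add_apply, ContinuousLinearMap.smul_apply,
    ContinuousLinearMap.comp_apply, ContinuousLinearMap.apply_apply,
    ContinuousLinearMap.coe_snd', ContinuousLinearMap.neg_apply, smul_eq_mul]
  linear_combination (fderiv ℝ Ψ p (0,1)) * e1 - (fderiv ℝ Ψ p (1,0)) * e2
    + (fderiv ℝ Ψ p (0,1))^2 * hsy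
end

section
/- Let Ω ⊆ ℝ² be open, g ∈ ℝ, let Ψ : Ω → ℝ be twice continuously differentiable, let ρ, β : ℝ → ℝ be continuously differentiable, and let B : ℝ → ℝ be an antiderivative of β (B′ = β). Suppose ΔΨ(x, y) = g·y·ρ′(−Ψ(x, y)) − β(Ψ(x, y)) at every point (x, y) ∈ Ω. Define P : Ω → ℝ by P(x, y) = −|∇Ψ(x, y)|²/2 − g·y·ρ(−Ψ(x, y)) − B(Ψ(x, y)). Then P is differentiable and at every point of Ω: Ψ_y Ψ_{xy} − Ψ_x Ψ_{yy} = −P_x and Ψ_x Ψ_{xy} − Ψ_y Ψ_{xx} = −P_y − g·ρ(−Ψ). -/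
/-- Recovery of the pressure: if `Ψ` solves the semilinear equation
`ΔΨ = g·y·ρ′(−Ψ) − β(Ψ)` and `B′ = β`, then the pressure
`P = −|∇Ψ|²/2 − g·y·ρ(−Ψ) − B(Ψ)` is differentiable and the stream-function
form of the Euler momentum equations holds. -/
theorem stmt_9 (Ω : Set (ℝ × ℝ)) (hΩ : IsOpen Ω) (g : ℝ)
    (Ψ : ℝ × ℝ → ℝ) (hΨ : ContDiffOn ℝ 2 Ψ Ω)
    (ρ β : ℝ → ℝ) (hρ : ContDiff ℝ 1 ρ) (hβ : ContDiff ℝ 1 β)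
    (B : ℝ → ℝ) (hB : ∀ t : ℝ, HasDerivAt B (β t) t)
    (hsemi : ∀ p ∈ Ω, lap Ψ p = g * p.2 * deriv ρ (-(Ψ p)) - β (Ψ p))
    (P : ℝ × ℝ → ℝ)
    (hP : P = fun p => -(((pd1 Ψ p) ^ 2 + (pd2 Ψ p) ^ 2) / 2)
      - g * p.2 * ρ (-(Ψ p)) - B (Ψ p)) :
    (∀ p ∈ Ω, DifferentiableAt ℝ P p) ∧
    (∀ p ∈ Ω,
      pd2 Ψ p * pd2 (pd1 Ψ) p - pd1 Ψ p * pd2 (pd2 Ψ) p = -(pd1 P p) ∧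
      pd1 Ψ p * pd2 (pd1 Ψ) p - pd2 Ψ p * pd1 (pd1 Ψ) p
        = -(pd2 P p) - g * ρ (-(Ψ p))) := by
  have hfun : P = fun q => (-(1/2) : ℝ) * (pd1 Ψ q * pd1 Ψ q + pd2 Ψ q * pd2 Ψ q)
      - g * q.2 * ρ (-(Ψ q)) - B (Ψ q) := by
    rw [hP]; funext q; ring
  have key : ∀ p ∈ Ω, DifferentiableAt ℝ P p ∧
      (pd2 Ψ p * pd2 (pd1 Ψ) p - pd1 Ψ p * pd2 (pd2 Ψ) p = -(pd1 P p) ∧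
      pd1 Ψ p * pd2 (pd1 Ψ) p - pd2 Ψ p * pd1 (pd1 Ψ) p
        = -(pd2 P p) - g * ρ (-(Ψ p))) := by
    intro p hp
    have hmem := hΩ.mem_nhds hp
    have h2 : ContDiffAt ℝ 2 Ψ p := hΨ.contDiffAt hmem
    set U := fderiv ℝ Ψ p with hU
    set A := fderiv ℝ (fderiv ℝ Ψ) p with hA
    have hΨ' : HasFDerivAt Ψ U p :=
      (h2.differentiableAt (by norm_num)).hasFDerivAt
    have hA' : HasFDerivAt (fderiv ℝ Ψ) A p :=
      ((h2.fderiv_right (m := 1) (by norm_num)).differentiableAt (by norm_num)).hasFDerivAt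
    have hsymm : ∀ v w, A v w = A w v := h2.isSymmSndFDerivAt (by simp)
    have hu : HasFDerivAt (pd1 Ψ) (A.flip (1, 0)) p := by
      have h := hA'.clm_apply (hasFDerivAt_const ((1:ℝ), (0:ℝ)) p); simp at h; exact h
    have hv : HasFDerivAt (pd2 Ψ) (A.flip (0, 1)) p := by
      have h := hA'.clm_apply (hasFDerivAt_const ((0:ℝ), (1:ℝ)) p); simp at h; exact h
    have hρ' : HasDerivAt ρ (deriv ρ (-(Ψ p))) (-(Ψ p)) :=
      (hρ.differentiable one_ne_zero (-(Ψ p))).hasDerivAt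
    have hρc : HasFDerivAt (fun q => ρ (-(Ψ q))) (deriv ρ (-(Ψ p)) • (-U)) p :=
      hρ'.comp_hasFDerivAt p hΨ'.neg
    have hBc : HasFDerivAt (fun q => B (Ψ q)) (β (Ψ p) • U) p :=
      (hB (Ψ p)).comp_hasFDerivAt p hΨ'
    have hy : HasFDerivAt (fun q : ℝ × ℝ => g * q.2)
        (g • ContinuousLinearMap.snd ℝ ℝ ℝ) p := hasFDerivAt_snd.const_mul g
    have hmul : HasFDerivAt (fun q : ℝ × ℝ => g * q.2 * ρ (-(Ψ q)))
        ((g * p.2) • (deriv ρ (-(Ψ p)) • (-U)) +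
          ρ (-(Ψ p)) • (g • ContinuousLinearMap.snd ℝ ℝ ℝ)) p := hy.mul hρc
    have hsq : HasFDerivAt
        (fun q => (-(1/2) : ℝ) * (pd1 Ψ q * pd1 Ψ q + pd2 Ψ q * pd2 Ψ q))
        ((-(1/2) : ℝ) • ((pd1 Ψ p • A.flip (1, 0) + pd1 Ψ p • A.flip (1, 0)) +
          (pd2 Ψ p • A.flip (0, 1) + pd2 Ψ p • A.flip (0, 1)))) p :=
      ((hu.mul hu).add (hv.mul hv)).const_mul _
    have hPd : HasFDerivAt P
        ((-(1/2) : ℝ) • ((pd1 Ψ p • A.flip (1, 0) + pd1 Ψ p • A.flip (1, 0)) +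
          (pd2 Ψ p • A.flip (0, 1) + pd2 Ψ p • A.flip (0, 1)))
          - ((g * p.2) • (deriv ρ (-(Ψ p)) • (-U)) +
            ρ (-(Ψ p)) • (g • ContinuousLinearMap.snd ℝ ℝ ℝ))
          - β (Ψ p) • U) p := by
      rw [hfun]; exact (hsq.sub hmul).sub hBc
    refine ⟨hPd.differentiableAt, ?_, ?_⟩
    · have hsemi' := hsemi p hp
      have e11 : pd1 (pd1 Ψ) p = A (1, 0) (1, 0) := by
        rw [pd1, hu.fderiv]; rfl
      have e22 : pd2 (pd2 Ψ) p = A (0, 1) (0, 1) := by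
        rw [pd2, hv.fderiv]; rfl
      have e21 : pd2 (pd1 Ψ) p = A (0, 1) (1, 0) := by
        rw [pd2, hu.fderiv]; rfl
      rw [lap, e11, e22] at hsemi'
      have hp1 : pd1 P p = ((-(1/2) : ℝ) • ((pd1 Ψ p • A.flip (1, 0) + pd1 Ψ p • A.flip (1, 0)) +
          (pd2 Ψ p • A.flip (0, 1) + pd2 Ψ p • A.flip (0, 1)))
          - ((g * p.2) • (deriv ρ (-(Ψ p)) • (-U)) +
            ρ (-(Ψ p)) • (g • ContinuousLinearMap.snd ℝ ℝ ℝ))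
          - β (Ψ p) • U) (1, 0) := by rw [pd1, hPd.fderiv]
      simp only [ContinuousLinearMap.sub_apply, ContinuousLinearMap.add_apply,
        ContinuousLinearMap.smul_apply, ContinuousLinearMap.neg_apply,
        ContinuousLinearMap.flip_apply,
        smul_eq_mul] at hp1
      have hsnd1 : (ContinuousLinearMap.snd ℝ ℝ ℝ) ((1:ℝ), (0:ℝ)) = 0 := rfl
      rw [hsnd1] at hp1
      rw [e21, e22, hp1]
      have hU1 : U (1, 0) = pd1 Ψ p := rfl
      have hU2 : U (0, 1) = pd2 Ψ p := rfl
      rw [hU1]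
      have hs := hsymm (1, 0) (0, 1)
      linear_combination -(pd1 Ψ p) * hsemi' - (pd2 Ψ p) * hs
    · have hsemi' := hsemi p hp
      have e11 : pd1 (pd1 Ψ) p = A (1, 0) (1, 0) := by
        rw [pd1, hu.fderiv]; rfl
      have e22 : pd2 (pd2 Ψ) p = A (0, 1) (0, 1) := by
        rw [pd2, hv.fderiv]; rfl
      have e21 : pd2 (pd1 Ψ) p = A (0, 1) (1, 0) := by
        rw [pd2, hu.fderiv]; rfl
      rw [lap, e11, e22] at hsemi'
      have hp2 : pd2 P p = ((-(1/2) : ℝ) • ((pd1 Ψ p • A.flip (1, 0) + pd1 Ψ p • A.flip (1, 0)) +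
          (pd2 Ψ p • A.flip (0, 1) + pd2 Ψ p • A.flip (0, 1)))
          - ((g * p.2) • (deriv ρ (-(Ψ p)) • (-U)) +
            ρ (-(Ψ p)) • (g • ContinuousLinearMap.snd ℝ ℝ ℝ))
          - β (Ψ p) • U) (0, 1) := by rw [pd2, hPd.fderiv]
      simp only [ContinuousLinearMap.sub_apply, ContinuousLinearMap.add_apply,
        ContinuousLinearMap.smul_apply, ContinuousLinearMap.neg_apply,
        ContinuousLinearMap.flip_apply,
        smul_eq_mul] at hp2
      have hsnd2 : (ContinuousLinearMap.snd ℝ ℝ ℝ) ((0:ℝ), (1:ℝ)) = 1 := rfl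
      rw [hsnd2] at hp2
      rw [e21, e11, hp2]
      have hU2 : U (0, 1) = pd2 Ψ p := rfl
      rw [hU2]
      linear_combination -(pd2 Ψ p) * hsemi'
  exact ⟨fun p hp => (key p hp).1, fun p hp => (key p hp).2⟩
end
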